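/- Let S be a contractible P-polyhedral system with attractor K. If y ∈ K is a cut point of K not in G_S(V_P) = ⋃_{j∈I*} S_j(V_P), then the number of connected components of K \ {y} is at most n_P, the number of vertices of P. -/

import Mathlib

open Set

/-- `S` is a `P`-polyhedral system with vertex set `V`: the maps are contraction
similarities, each `Pᵢ = Sᵢ(P)` lies in `P`, distinct `Pᵢ, Pⱼ` meet in at most one
point which is then a common vertex, and every vertex of `P` is a vertex of some
`Pᵢ`. -/
def IsPPolyhedralSystem {d : ℕ} {ι : Type*} (P : Set (EuclideanSpace ℝ (Fin d)))
    (V : Finset (EuclideanSpace ℝ (Fin d)))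
    (S : ι → EuclideanSpace ℝ (Fin d) → EuclideanSpace ℝ (Fin d)) : Prop :=
  (∀ i, ∃ r ∈ Set.Ioo (0 : ℝ) 1, ∀ x y, dist (S i x) (S i y) = r * dist x y) ∧
  (∀ i, S i '' P ⊆ P) ∧
  (∀ i j, i ≠ j → (S i '' P ∩ S j '' P = ∅ ∨
    ∃ v, S i '' P ∩ S j '' P = {v} ∧ v ∈ S i '' (V : Set (EuclideanSpace ℝ (Fin d))) ∧
      v ∈ S j '' (V : Set (EuclideanSpace ℝ (Fin d))))) ∧
  ((V : Set (EuclideanSpace ℝ (Fin d))) ⊆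
    ⋃ i, S i '' (V : Set (EuclideanSpace ℝ (Fin d))))

/-- The polyhedron data: `P` is a compact set homeomorphic to the closed `d`-ball, with
finite vertex set `V ⊆ P`. -/
def IsPolyhedronWithVertices {d : ℕ} (P : Set (EuclideanSpace ℝ (Fin d)))
    (V : Finset (EuclideanSpace ℝ (Fin d))) : Prop :=
  IsCompact P ∧ (V : Set (EuclideanSpace ℝ (Fin d))) ⊆ P ∧
    Nonempty (P ≃ₜ Metric.closedBall (0 : EuclideanSpace ℝ (Fin d)) 1)

/-- The composition `S_{j₁} ∘ ⋯ ∘ S_{jₙ}` associated to a multiindex `j`. -/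
def Sw {d : ℕ} {ι : Type*} (S : ι → EuclideanSpace ℝ (Fin d) → EuclideanSpace ℝ (Fin d)) :
    List ι → EuclideanSpace ℝ (Fin d) → EuclideanSpace ℝ (Fin d) :=
  fun l => l.foldr (fun i f => S i ∘ f) id

section auxiliary

lemma Sw_nil_apply {d : ℕ} {ι : Type*} (S : ι → EuclideanSpace ℝ (Fin d) → EuclideanSpace ℝ (Fin d))
    (x : EuclideanSpace ℝ (Fin d)) : Sw S [] x = x := rfl

lemma Sw_cons_apply {d : ℕ} {ι : Type*} (S : ι → EuclideanSpace ℝ (Fin d) → EuclideanSpace ℝ (Fin d))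
    (i : ι) (l : List ι) (x : EuclideanSpace ℝ (Fin d)) : Sw S (i :: l) x = S i (Sw S l x) := rfl

lemma Sw_append_apply {d : ℕ} {ι : Type*} (S : ι → EuclideanSpace ℝ (Fin d) → EuclideanSpace ℝ (Fin d))
    (l l' : List ι) (x : EuclideanSpace ℝ (Fin d)) : Sw S (l ++ l') x = Sw S l (Sw S l' x) := by
  induction l with
  | nil => rfl
  | cons i t ih => rw [List.cons_append, Sw_cons_apply, Sw_cons_apply, ih]

open Set

/-- Boundary bumping: in a compact connected T2 ambient set `K`, the connected component
of a point in a proper compact subset `W` must meet `closure (K \ W)`. -/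
lemma bump_lemma {X : Type*} [TopologicalSpace X] [T2Space X] {K W : Set X}
    (hK : IsCompact K) (hKconn : IsPreconnected K) (hW : IsCompact W) (hWK : W ⊆ K)
    (hWne : W ≠ K) {x : X} (hx : x ∈ W) :
    (connectedComponentIn W x ∩ closure (K \ W)).Nonempty := by
  by_contra hcon
  rw [Set.not_nonempty_iff_eq_empty] at hcon
  haveI : CompactSpace ↥W := isCompact_iff_compactSpace.mp hW
  set x' : ↥W := ⟨x, hx⟩
  have hcomp : connectedComponentIn W x = Subtype.val '' connectedComponent x' :=
    connectedComponentIn_eq_image hx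
  -- the preimage of the closure is compact and disjoint from the component
  set F' : Set ↥W := Subtype.val ⁻¹' (closure (K \ W)) with hF'def
  have hF'c : IsCompact F' := (IsClosed.preimage continuous_subtype_val isClosed_closure).isCompact
  have hdisj : connectedComponent x' ∩ F' = ∅ := by
    rw [Set.eq_empty_iff_forall_notMem]
    rintro a ⟨ha1, ha2⟩
    have : (a : X) ∈ connectedComponentIn W x ∩ closure (K \ W) := by
      refine ⟨?_, ha2⟩
      rw [hcomp]; exact ⟨a, ha1, rfl⟩
    rw [hcon] at this; exact this
  -- Šura-Bura
  have hSB := connectedComponent_eq_iInter_isClopen x'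
  -- finite subcover
  have hcover : F' ⊆ ⋃ Z : { Z : Set ↥W // IsClopen Z ∧ x' ∈ Z }, (↑Z : Set ↥W)ᶜ := by
    intro a ha
    by_contra hna
    simp only [mem_iUnion, not_exists, mem_compl_iff, not_not] at hna
    have : a ∈ connectedComponent x' := by rw [hSB, mem_iInter]; exact fun Z => hna Z
    exact absurd hdisj (Set.Nonempty.ne_empty ⟨a, this, ha⟩)
  obtain ⟨t, ht⟩ := hF'c.elim_finite_subcover _ (fun Z => Z.2.1.compl.isOpen) hcover
  set E : Set ↥W := ⋂ Z ∈ t, (↑Z : Set ↥W) with hEdef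
  have hEclopen : IsClopen E := isClopen_biInter_finset fun Z _ => Z.2.1
  have hxE : x' ∈ E := by rw [hEdef, mem_iInter₂]; exact fun Z _ => Z.2.2
  have hEF' : E ∩ F' = ∅ := by
    rw [Set.eq_empty_iff_forall_notMem]
    rintro a ⟨ha1, ha2⟩
    obtain ⟨Z, hZt, hZ⟩ := mem_iUnion₂.mp (ht ha2)
    exact hZ (mem_iInter₂.mp ha1 Z hZt)
  -- push down to the ambient space
  set E₀ : Set X := Subtype.val '' E with hE₀def
  have hE₀W : E₀ ⊆ W := by rintro _ ⟨a, _, rfl⟩; exact a.2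
  have hE₀c : IsCompact E₀ := (hEclopen.isClosed.isCompact).image continuous_subtype_val
  have hE₀cl : E₀ ∩ closure (K \ W) = ∅ := by
    rw [Set.eq_empty_iff_forall_notMem]
    rintro z ⟨⟨a, ha, rfl⟩, hz2⟩
    exact absurd hEF' (Set.Nonempty.ne_empty ⟨a, ha, hz2⟩)
  obtain ⟨O, hOopen, hOE⟩ := isOpen_induced_iff.mp hEclopen.isOpen
  have hE₀O : E₀ = O ∩ W := by
    rw [hE₀def, ← hOE, Subtype.image_preimage_coe, Set.inter_comm]
  -- the two open sets
  set u : Set X := O ∩ (closure (K \ W))ᶜ with hudef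
  have hu : IsOpen u := hOopen.inter isClosed_closure.isOpen_compl
  have hv : IsOpen E₀ᶜ := hE₀c.isClosed.isOpen_compl
  have hKu : K ∩ u = E₀ := by
    apply Set.Subset.antisymm
    · rintro z ⟨hzK, hzO, hzcl⟩
      have hzW : z ∈ W := by
        by_contra hzW
        exact hzcl (subset_closure ⟨hzK, hzW⟩)
      rw [hE₀O]; exact ⟨hzO, hzW⟩
    · intro z hz
      refine ⟨hWK (hE₀W hz), ?_, ?_⟩
      · rw [hE₀O] at hz; exact hz.1
      · intro hzcl
        exact absurd hE₀cl (Set.Nonempty.ne_empty ⟨z, hz, hzcl⟩)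
  have hsub : K ⊆ u ∪ E₀ᶜ := by
    intro z hzK
    by_cases hzE : z ∈ E₀
    · left; rw [← hKu] at hzE; exact hzE.2
    · right; exact hzE
  have hne1 : (K ∩ u).Nonempty := ⟨x, by rw [hKu]; exact ⟨x', hxE, rfl⟩⟩
  have hne2 : (K ∩ E₀ᶜ).Nonempty := by
    obtain ⟨z, hzK, hzW⟩ : ∃ z, z ∈ K ∧ z ∉ W := by
      by_contra h
      push_neg at h
      exact hWne (Set.Subset.antisymm hWK h)
    exact ⟨z, hzK, fun hzE => hzW (hE₀W hzE)⟩
  obtain ⟨z, hzK, hzu, hzv⟩ := hKconn u E₀ᶜ hu hv hsub hne1 hne2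
  exact hzv (by rw [← hKu]; exact ⟨hzK, hzu⟩)

/-- A decreasing intersection of nonempty compact preconnected sets is preconnected. -/
lemma nested_preconnected {X : Type*} [TopologicalSpace X] [T2Space X] (A : ℕ → Set X)
    (hc : ∀ n, IsCompact (A n)) (hmono : ∀ n, A (n + 1) ⊆ A n)
    (hconn : ∀ n, IsPreconnected (A n)) : IsPreconnected (⋂ n, A n) := by
  set L := ⋂ n, A n with hLdef
  intro u v hu hv hsub hne1 hne2
  by_contra hcon
  rw [Set.not_nonempty_iff_eq_empty] at hcon
  have hLc : IsCompact L := (hc 0).of_isClosed_subset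
    (isClosed_iInter fun n => (hc n).isClosed) (iInter_subset A 0)
  have hLsub : ∀ n, L ⊆ A n := fun n => iInter_subset A n
  -- separate the two compact pieces
  have hcLu : IsCompact (L ∩ closure u) := hLc.inter_right isClosed_closure
  have h1 : IsCompact (L ∩ u) := by
    have : L ∩ u = L \ v := by
      apply Set.Subset.antisymm
      · rintro z ⟨hz1, hz2⟩
        refine ⟨hz1, fun hzv => ?_⟩
        exact absurd hcon (Set.Nonempty.ne_empty ⟨z, hz1, hz2, hzv⟩)
      · rintro z ⟨hz1, hz2⟩
        rcases hsub hz1 with h | h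
        · exact ⟨hz1, h⟩
        · exact absurd h hz2
    rw [this]
    exact hLc.of_isClosed_subset (hLc.isClosed.sdiff hv) diff_subset
  have h2 : IsCompact (L ∩ v) := by
    have : L ∩ v = L \ u := by
      apply Set.Subset.antisymm
      · rintro z ⟨hz1, hz2⟩
        refine ⟨hz1, fun hzu => ?_⟩
        exact absurd hcon (Set.Nonempty.ne_empty ⟨z, hz1, hzu, hz2⟩)
      · rintro z ⟨hz1, hz2⟩
        rcases hsub hz1 with h | h
        · exact absurd h hz2
        · exact ⟨hz1, h⟩
    rw [this]
    exact hLc.of_isClosed_subset (hLc.isClosed.sdiff hu) diff_subset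
  have hdisj : Disjoint (L ∩ u) (L ∩ v) := by
    rw [Set.disjoint_iff_inter_eq_empty]
    rw [Set.eq_empty_iff_forall_notMem]
    rintro z ⟨⟨hz1, hz2⟩, _, hz3⟩
    exact absurd hcon (Set.Nonempty.ne_empty ⟨z, hz1, hz2, hz3⟩)
  obtain ⟨u', v', hu', hv', hsu', hsv', hdisj'⟩ := SeparatedNhds.of_isCompact_isCompact h1 h2 hdisj
  -- some A n is inside u' ∪ v'
  have hBne : ¬ (∀ n, (A n \ (u' ∪ v')).Nonempty) := by
    intro hall
    have := IsCompact.nonempty_iInter_of_sequence_nonempty_isCompact_isClosed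
      (fun n => A n \ (u' ∪ v'))
      (fun n => diff_subset_diff_left (hmono n)) hall
      ((hc 0).of_isClosed_subset ((hc 0).isClosed.sdiff (hu'.union hv')) diff_subset)
      (fun n => (hc n).isClosed.sdiff (hu'.union hv'))
    obtain ⟨z, hz⟩ := this
    simp only [mem_iInter, mem_diff] at hz
    have hz1 : z ∈ L := mem_iInter.mpr fun n => (hz n).1
    have hz2 := (hz 0).2
    rcases hsub hz1 with h | h
    · exact hz2 (Or.inl (hsu' ⟨hz1, h⟩))
    · exact hz2 (Or.inr (hsv' ⟨hz1, h⟩))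
  push_neg at hBne
  obtain ⟨N, hN⟩ := hBne
  rw [Set.diff_eq_empty] at hN
  obtain ⟨z, hz1, hz2, hz3⟩ := hconn N u' v' hu' hv' hN
    ((hne1.mono fun z hz => ⟨hLsub N hz.1, hsu' hz⟩))
    ((hne2.mono fun z hz => ⟨hLsub N hz.1, hsv' hz⟩))
  exact (hdisj'.ne_of_mem hz2 hz3) rfl

/-- If a finite family of nonempty closed sets `Pc i` has preconnected union, and `B i` are
preconnected nonempty sets such that `B i` meets `B j` whenever `Pc i` meets `Pc j`,
then `⋃ i, B i` is preconnected. -/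
lemma union_preconnected_of_pattern {X Y : Type*} [TopologicalSpace X] [TopologicalSpace Y]
    {ι : Type*} [Finite ι] (Pc : ι → Set X) (B : ι → Set Y)
    (hPclosed : ∀ i, IsClosed (Pc i)) (hPne : ∀ i, (Pc i).Nonempty)
    (hU : IsPreconnected (⋃ i, Pc i))
    (hBconn : ∀ i, IsPreconnected (B i)) (hBne : ∀ i, (B i).Nonempty)
    (hmeet : ∀ i j, (Pc i ∩ Pc j).Nonempty → (B i ∩ B j).Nonempty) :
    IsPreconnected (⋃ i, B i) := by
  cases isEmpty_or_nonempty ι with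
  | inl h => rw [iUnion_of_empty]; exact isPreconnected_empty
  | inr h =>
    obtain ⟨i₀⟩ := h
    -- Step 1: every index is reachable from i₀ in the intersection graph
    set rel : ι → ι → Prop := fun a b => (Pc a ∩ Pc b).Nonempty with hreldef
    have hreach : ∀ j, Relation.ReflTransGen rel i₀ j := by
      by_contra hcon
      push_neg at hcon
      obtain ⟨j₀, hj₀⟩ := hcon
      set s : Set ι := {j | Relation.ReflTransGen rel i₀ j} with hsdef
      set Up : Set X := ⋃ j ∈ s, Pc j with hUpdef
      set Down : Set X := ⋃ j ∈ sᶜ, Pc j with hDowndef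
      have hUpc : IsClosed Up := Set.Finite.isClosed_biUnion (Set.toFinite s)
        (fun j _ => hPclosed j)
      have hDownc : IsClosed Down := Set.Finite.isClosed_biUnion (Set.toFinite sᶜ)
        (fun j _ => hPclosed j)
      have hcover : (⋃ i, Pc i) ⊆ Up ∪ Down := by
        intro z hz
        obtain ⟨j, hj⟩ := mem_iUnion.mp hz
        by_cases hjs : j ∈ s
        · exact Or.inl (mem_biUnion hjs hj)
        · exact Or.inr (mem_biUnion hjs hj)
      have hne1 : ((⋃ i, Pc i) ∩ Up).Nonempty := by
        obtain ⟨z, hz⟩ := hPne i₀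
        exact ⟨z, mem_iUnion.mpr ⟨i₀, hz⟩, mem_biUnion (Relation.ReflTransGen.refl) hz⟩
      have hne2 : ((⋃ i, Pc i) ∩ Down).Nonempty := by
        obtain ⟨z, hz⟩ := hPne j₀
        exact ⟨z, mem_iUnion.mpr ⟨j₀, hz⟩, mem_biUnion hj₀ hz⟩
      obtain ⟨z, _, hzUp, hzDown⟩ := isPreconnected_closed_iff.mp hU Up Down hUpc hDownc
        hcover hne1 hne2
      obtain ⟨a, has, hza⟩ := mem_iUnion₂.mp hzUp
      obtain ⟨b, hbs, hzb⟩ := mem_iUnion₂.mp hzDown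
      exact hbs (Relation.ReflTransGen.tail has ⟨z, hza, hzb⟩)
    -- Step 2: chains of preconnected sets
    have hchain : ∀ j, Relation.ReflTransGen rel i₀ j →
        ∃ t, t ⊆ (⋃ i, B i) ∧ IsPreconnected t ∧ B i₀ ⊆ t ∧ B j ⊆ t := by
      intro j hj
      induction hj with
      | refl => exact ⟨B i₀, subset_iUnion B i₀, hBconn i₀, subset_rfl, subset_rfl⟩
      | @tail b c hab hbc ih =>
        obtain ⟨t, ht1, ht2, ht3, ht4⟩ := ih
        obtain ⟨q, hq1, hq2⟩ := hmeet b c hbc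
        refine ⟨t ∪ B c, union_subset ht1 (subset_iUnion B c), ?_, ht3.trans subset_union_left,
          subset_union_right⟩
        exact IsPreconnected.union q (ht4 hq1) hq2 ht2 (hBconn c)
    -- Step 3: conclude
    obtain ⟨x₀, hx₀⟩ := hBne i₀
    apply isPreconnected_of_forall x₀
    intro z hz
    obtain ⟨j, hj⟩ := mem_iUnion.mp hz
    obtain ⟨t, ht1, ht2, ht3, ht4⟩ := hchain j (hreach j)
    exact ⟨t, ht1, ht3 hx₀, ht4 hj, ht2⟩


end auxiliary

/-- For the attractor `K` of a contractible `P`-polyhedral system, a cut point `y ∈ K`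
not a vertex of any `P_j` has at most `n_P = #V` components in `K \ {y}`. -/
theorem stmt_17 {d m : ℕ} (P : Set (EuclideanSpace ℝ (Fin d)))
    (V : Finset (EuclideanSpace ℝ (Fin d)))
    (S : Fin m → EuclideanSpace ℝ (Fin d) → EuclideanSpace ℝ (Fin d))
    (hP : IsPolyhedronWithVertices P V)
    (hS : IsPPolyhedralSystem P V S)
    (hcontr : ContractibleSpace ↥(⋃ i, S i '' P))
    (K : Set (EuclideanSpace ℝ (Fin d))) (hKne : K.Nonempty) (hKc : IsCompact K)
    (hKinv : K = ⋃ i, S i '' K)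
    (y : EuclideanSpace ℝ (Fin d)) (hy : y ∈ K)
    (hcut : ¬ IsPreconnected (K \ {y}))
    (hyv : y ∉ ⋃ j : List (Fin m), Sw S j '' (V : Set (EuclideanSpace ℝ (Fin d)))) :
    {C : Set (EuclideanSpace ℝ (Fin d)) |
        ∃ z ∈ K \ {y}, C = connectedComponentIn (K \ {y}) z}.Finite ∧
    Nat.card {C : Set (EuclideanSpace ℝ (Fin d)) |
        ∃ z ∈ K \ {y}, C = connectedComponentIn (K \ {y}) z} ≤ V.card := by
  classical
  obtain ⟨hPcomp, hVP, ⟨e⟩⟩ := hP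
  obtain ⟨hsim, hD2, hD3, hD4⟩ := hS
  choose r hrmem hrdist using hsim
  have hr0 : ∀ i, 0 < r i := fun i => (hrmem i).1
  have hr1 : ∀ i, r i < 1 := fun i => (hrmem i).2
  obtain ⟨k₀, hk₀⟩ := hKne
  haveI hFmne : Nonempty (Fin m) := by
    rcases Nat.eq_zero_or_pos m with hm | hm
    · subst hm
      rw [hKinv] at hk₀
      obtain ⟨i, _⟩ := mem_iUnion.mp hk₀
      exact i.elim0
    · exact ⟨⟨0, hm⟩⟩
  -- uniform contraction ratio
  set R : ℝ := Finset.univ.sup' Finset.univ_nonempty r with hRdef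
  have hrR : ∀ i, r i ≤ R := fun i => Finset.le_sup' r (Finset.mem_univ i)
  have hR0 : 0 < R := lt_of_lt_of_le (hr0 (Classical.arbitrary _)) (hrR _)
  have hR1 : R < 1 := (Finset.sup'_lt_iff _).mpr fun i _ => hr1 i
  -- continuity and injectivity
  have hScont : ∀ i, Continuous (S i) := by
    intro i
    have : LipschitzWith (Real.toNNReal (r i)) (S i) := by
      rw [lipschitzWith_iff_dist_le_mul]
      intro a b
      rw [hrdist i a b, Real.coe_toNNReal _ (hr0 i).le]
    exact this.continuous
  have hSinj : ∀ i, Function.Injective (S i) := by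
    intro i a b hab
    have h1 := hrdist i a b
    rw [hab, dist_self] at h1
    rcases mul_eq_zero.mp h1.symm with h | h
    · exact absurd h (ne_of_gt (hr0 i))
    · exact dist_eq_zero.mp h
  have hSwdist : ∀ w : List (Fin m), ∃ ρ : ℝ, 0 < ρ ∧ ρ ≤ R ^ w.length ∧
      ∀ a b, dist (Sw S w a) (Sw S w b) = ρ * dist a b := by
    intro w
    induction w with
    | nil => exact ⟨1, one_pos, by simp, fun a b => by rw [Sw_nil_apply, Sw_nil_apply, one_mul]⟩
    | cons i l ih =>
      obtain ⟨ρ, hρ0, hρR, hρ⟩ := ih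
      refine ⟨r i * ρ, mul_pos (hr0 i) hρ0, ?_, ?_⟩
      · calc r i * ρ ≤ R * R ^ l.length :=
              mul_le_mul (hrR i) hρR hρ0.le hR0.le
          _ = R ^ (i :: l).length := by rw [List.length_cons, pow_succ']
      · intro a b
        rw [Sw_cons_apply, Sw_cons_apply, hrdist, hρ, mul_assoc]
  have hSwcont : ∀ w : List (Fin m), Continuous (Sw S w) := by
    intro w
    induction w with
    | nil => exact continuous_id
    | cons i l ih => exact (hScont i).comp ih
  have hSwinj : ∀ w : List (Fin m), Function.Injective (Sw S w) := by
    intro w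
    induction w with
    | nil => exact fun a b h => h
    | cons i l ih =>
      intro a b h
      rw [Sw_cons_apply, Sw_cons_apply] at h
      exact ih (hSinj i h)
  have hSwP : ∀ w : List (Fin m), Sw S w '' P ⊆ P := by
    intro w
    induction w with
    | nil => intro x hx; obtain ⟨p, hp, rfl⟩ := hx; exact hp
    | cons i l ih =>
      rintro x ⟨p, hp, rfl⟩
      rw [Sw_cons_apply]
      exact hD2 i ⟨Sw S l p, ih ⟨p, hp, rfl⟩, rfl⟩
  have hSiK : ∀ i, S i '' K ⊆ K := by
    intro i x hx
    rw [hKinv]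
    exact mem_iUnion.mpr ⟨i, hx⟩
  have hSwK : ∀ w : List (Fin m), Sw S w '' K ⊆ K := by
    intro w
    induction w with
    | nil => intro x hx; obtain ⟨p, hp, rfl⟩ := hx; exact hp
    | cons i l ih =>
      rintro x ⟨p, hp, rfl⟩
      rw [Sw_cons_apply]
      exact hSiK i ⟨Sw S l p, ih ⟨p, hp, rfl⟩, rfl⟩
  -- nonemptiness of P and diameter bounds
  have hPne : P.Nonempty := by
    have hb : (Metric.closedBall (0 : EuclideanSpace ℝ (Fin d)) 1).Nonempty :=
      Metric.nonempty_closedBall.mpr zero_le_one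
    obtain ⟨b, hbmem⟩ := hb
    exact ⟨(e.symm ⟨b, hbmem⟩ : ↥P), (e.symm ⟨b, hbmem⟩).2⟩
  obtain ⟨p₀, hp₀⟩ := hPne
  set D : ℝ := Metric.diam (K ∪ P) with hDdef
  have hbdd : Bornology.IsBounded (K ∪ P) := hKc.isBounded.union hPcomp.isBounded
  have hDb : ∀ a ∈ K ∪ P, ∀ b ∈ K ∪ P, dist a b ≤ D :=
    fun a ha b hb => Metric.dist_le_diam_of_mem hbdd ha hb
  have hsmall : ∀ ε > (0:ℝ), ∃ n : ℕ, R ^ n * D < ε := by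
    intro ε hε
    have hRD : Filter.Tendsto (fun n : ℕ => R ^ n * D) Filter.atTop (nhds 0) := by
      have := (tendsto_pow_atTop_nhds_zero_of_lt_one hR0.le hR1).mul_const D
      simpa using this
    exact (hRD.eventually (gt_mem_nhds hε)).exists
  -- K is contained in P
  have hKiter : ∀ n : ℕ, ∀ x ∈ K, ∃ w : List (Fin m), w.length = n ∧ x ∈ Sw S w '' K := by
    intro n
    induction n with
    | zero => exact fun x hx => ⟨[], rfl, ⟨x, hx, rfl⟩⟩
    | succ n ih =>
      intro x hx
      rw [hKinv] at hx
      obtain ⟨i, hxi⟩ := mem_iUnion.mp hx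
      obtain ⟨x', hx', hxeq⟩ := hxi
      obtain ⟨w, hwlen, k, hk, hkeq⟩ := ih x' hx'
      exact ⟨i :: w, by simp [hwlen], ⟨k, hk, by rw [Sw_cons_apply, hkeq, hxeq]⟩⟩
  have hKP : K ⊆ P := by
    intro x hx
    have hcl : x ∈ closure P := by
      rw [Metric.mem_closure_iff]
      intro ε hε
      obtain ⟨n, hn⟩ := hsmall ε hε
      obtain ⟨w, hwlen, k, hk, hkeq⟩ := hKiter n x hx
      obtain ⟨ρ, hρ0, hρR, hρ⟩ := hSwdist w
      rw [hwlen] at hρR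
      refine ⟨Sw S w p₀, hSwP w ⟨p₀, hp₀, rfl⟩, ?_⟩
      calc dist x (Sw S w p₀) = ρ * dist k p₀ := by rw [← hkeq, hρ]
        _ ≤ R ^ n * D :=
            mul_le_mul hρR (hDb k (Or.inl hk) p₀ (Or.inr hp₀)) dist_nonneg (pow_nonneg hR0.le n)
        _ < ε := hn
    rwa [hPcomp.isClosed.closure_eq] at hcl
  -- V is contained in K
  have hViter : ∀ n : ℕ, ∀ v ∈ (V : Set (EuclideanSpace ℝ (Fin d))),
      ∃ w : List (Fin m), w.length = n ∧ v ∈ Sw S w '' (V : Set (EuclideanSpace ℝ (Fin d))) := by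
    intro n
    induction n with
    | zero => exact fun v hv => ⟨[], rfl, ⟨v, hv, rfl⟩⟩
    | succ n ih =>
      intro v hv
      obtain ⟨i, hvi⟩ := mem_iUnion.mp (hD4 hv)
      obtain ⟨v', hv', hveq⟩ := hvi
      obtain ⟨w, hwlen, v'', hv'', hv''eq⟩ := ih v' hv'
      exact ⟨i :: w, by simp [hwlen], ⟨v'', hv'', by rw [Sw_cons_apply, hv''eq, hveq]⟩⟩
  have hVK : (V : Set (EuclideanSpace ℝ (Fin d))) ⊆ K := by
    intro v hv
    have hcl : v ∈ closure K := by
      rw [Metric.mem_closure_iff]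
      intro ε hε
      obtain ⟨n, hn⟩ := hsmall ε hε
      obtain ⟨w, hwlen, v', hv', hveq⟩ := hViter n v hv
      obtain ⟨ρ, hρ0, hρR, hρ⟩ := hSwdist w
      rw [hwlen] at hρR
      refine ⟨Sw S w k₀, hSwK w ⟨k₀, hk₀, rfl⟩, ?_⟩
      calc dist v (Sw S w k₀) = ρ * dist v' k₀ := by rw [← hveq, hρ]
        _ ≤ R ^ n * D :=
            mul_le_mul hρR (hDb v' (Or.inr (hVP hv')) k₀ (Or.inl hk₀)) dist_nonneg
              (pow_nonneg hR0.le n)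
        _ < ε := hn
    rwa [hKc.isClosed.closure_eq] at hcl
  -- vertices of P lying in a piece are vertices of that piece
  have hVpiece : ∀ w : List (Fin m), ∀ a ∈ (V : Set (EuclideanSpace ℝ (Fin d))),
      a ∈ Sw S w '' P → a ∈ Sw S w '' (V : Set (EuclideanSpace ℝ (Fin d))) := by
    intro w
    induction w with
    | nil => intro a ha _; exact ⟨a, ha, rfl⟩
    | cons i u ih =>
      intro a ha ham
      obtain ⟨b, hb, hbeq⟩ := ham
      rw [Sw_cons_apply] at hbeq
      obtain ⟨j, hj⟩ := mem_iUnion.mp (hD4 ha)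
      obtain ⟨c, hc, hceq⟩ := hj
      by_cases hij : j = i
      · subst hij
        have hcb : c = Sw S u b := hSinj j (by rw [hceq, hbeq])
        obtain ⟨v', hv', hv'eq⟩ := ih c hc ⟨b, hb, hcb.symm⟩
        exact ⟨v', hv', by rw [Sw_cons_apply, hv'eq, hceq]⟩
      · have hne : i ≠ j := fun h => hij h.symm
        have haij : a ∈ S i '' P ∩ S j '' P :=
          ⟨⟨Sw S u b, hSwP u ⟨b, hb, rfl⟩, hbeq⟩, ⟨c, hVP hc, hceq⟩⟩
        rcases hD3 i j hne with hemp | ⟨v, hvint, hvi, hvj⟩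
        · rw [hemp] at haij; exact absurd haij (Set.notMem_empty a)
        · rw [hvint] at haij
          obtain ⟨av, havV, haveq⟩ := hvi
          have hav : av = Sw S u b := hSinj i (by rw [haveq, ← haij, hbeq])
          obtain ⟨v', hv', hv'eq⟩ := ih av havV ⟨b, hb, hav.symm⟩
          refine ⟨v', hv', ?_⟩
          rw [Sw_cons_apply, hv'eq, haveq, ← haij]
  -- distinct pieces of the same level meet only in vertex images
  have hsep : ∀ w w' : List (Fin m), w.length = w'.length → w ≠ w' →
      ∀ x, x ∈ Sw S w '' P → x ∈ Sw S w' '' P →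
      x ∈ Sw S w '' (V : Set (EuclideanSpace ℝ (Fin d))) := by
    intro w
    induction w with
    | nil =>
      intro w' hlen hne
      cases w' with
      | nil => exact absurd rfl hne
      | cons j u' => simp at hlen
    | cons i u ih =>
      intro w' hlen hne x hx hx'
      cases w' with
      | nil => simp at hlen
      | cons j u' =>
        simp only [List.length_cons, Nat.add_right_cancel_iff] at hlen
        obtain ⟨b, hb, hbeq⟩ := hx
        obtain ⟨c, hc, hceq⟩ := hx'
        rw [Sw_cons_apply] at hbeq
        rw [Sw_cons_apply] at hceq
        by_cases hij : i = j
        · subst hij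
          have hne' : u ≠ u' := fun h => hne (by rw [h])
          have hbc : Sw S u b = Sw S u' c := hSinj i (by rw [hbeq, hceq])
          obtain ⟨v', hv', hveq⟩ := ih u' hlen hne' (Sw S u b) ⟨b, hb, rfl⟩
            (by rw [hbc]; exact ⟨c, hc, rfl⟩)
          exact ⟨v', hv', by rw [Sw_cons_apply, hveq, hbeq]⟩
        · have haij : x ∈ S i '' P ∩ S j '' P :=
            ⟨⟨Sw S u b, hSwP u ⟨b, hb, rfl⟩, hbeq⟩, ⟨Sw S u' c, hSwP u' ⟨c, hc, rfl⟩, hceq⟩⟩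
          rcases hD3 i j hij with hemp | ⟨v, hvint, hvi, hvj⟩
          · rw [hemp] at haij; exact absurd haij (Set.notMem_empty x)
          · rw [hvint] at haij
            obtain ⟨av, havV, haveq⟩ := hvi
            have hav : av = Sw S u b := hSinj i (by rw [haveq, ← haij, hbeq])
            obtain ⟨v', hv', hv'eq⟩ := hVpiece u av havV ⟨b, hb, hav.symm⟩
            refine ⟨v', hv', ?_⟩
            rw [Sw_cons_apply, hv'eq, haveq, ← haij]
  -- covering K by pieces of level n
  have hcover : ∀ n : ℕ, ∀ x ∈ K, ∃ g : Fin n → Fin m, x ∈ Sw S (List.ofFn g) '' K := by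
    intro n
    induction n with
    | zero =>
      intro x hx
      refine ⟨fun i => i.elim0, ?_⟩
      rw [List.ofFn_zero]
      exact ⟨x, hx, rfl⟩
    | succ n ih =>
      intro x hx
      rw [hKinv] at hx
      obtain ⟨i, hxi⟩ := mem_iUnion.mp hx
      obtain ⟨x', hx', hxeq⟩ := hxi
      obtain ⟨g', k, hk, hkeq⟩ := ih x' hx'
      refine ⟨Fin.cons i g', ?_⟩
      have : List.ofFn (Fin.cons i g' : Fin (n+1) → Fin m) = i :: List.ofFn g' := by
        rw [List.ofFn_succ]
        congr 1
      rw [this]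
      exact ⟨k, hk, by rw [Sw_cons_apply, hkeq, hxeq]⟩
  -- the address sequence of y
  have hstep : ∀ w : List (Fin m), y ∈ Sw S w '' K → ∃ i, y ∈ Sw S (w ++ [i]) '' K := by
    intro w hw
    obtain ⟨k, hk, hkeq⟩ := hw
    rw [hKinv] at hk
    obtain ⟨i, hki⟩ := mem_iUnion.mp hk
    obtain ⟨k', hk', hkeq'⟩ := hki
    exact ⟨i, ⟨k', hk', by rw [Sw_append_apply, Sw_cons_apply, Sw_nil_apply, hkeq', hkeq]⟩⟩
  obtain ⟨g, hg⟩ : ∃ g : List (Fin m) → List (Fin m), ∀ w, y ∈ Sw S w '' K →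
      ((∃ i, g w = w ++ [i]) ∧ y ∈ Sw S (g w) '' K) := by
    refine ⟨fun w => if h : y ∈ Sw S w '' K then w ++ [(hstep w h).choose] else w, ?_⟩
    intro w hw
    simp only [dif_pos hw]
    exact ⟨⟨_, rfl⟩, (hstep w hw).choose_spec⟩
  set wseq : ℕ → List (Fin m) := fun n => g^[n] [] with hwseqdef
  have hyU : ∀ n, y ∈ Sw S (wseq n) '' K := by
    intro n
    induction n with
    | zero => exact ⟨y, hy, rfl⟩
    | succ n ih =>
      have : wseq (n+1) = g (wseq n) := Function.iterate_succ_apply' g n []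
      rw [this]
      exact (hg (wseq n) ih).2
  have hwlen : ∀ n, (wseq n).length = n := by
    intro n
    induction n with
    | zero => rfl
    | succ n ih =>
      have h1 : wseq (n+1) = g (wseq n) := Function.iterate_succ_apply' g n []
      obtain ⟨i, hi⟩ := (hg (wseq n) (hyU n)).1
      rw [h1, hi, List.length_append, ih]
      rfl
  set U : ℕ → Set (EuclideanSpace ℝ (Fin d)) := fun n => Sw S (wseq n) '' K with hUdef
  have hUc : ∀ n, IsCompact (U n) := fun n => hKc.image (hSwcont _)
  have hUK : ∀ n, U n ⊆ K := fun n => hSwK _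
  have hyUn : ∀ n, y ∈ U n := hyU
  have hUnest : ∀ n, U (n+1) ⊆ U n := by
    intro n x hx
    have h1 : wseq (n+1) = g (wseq n) := Function.iterate_succ_apply' g n []
    obtain ⟨i, hi⟩ := (hg (wseq n) (hyU n)).1
    rw [hUdef] at hx ⊢
    simp only at hx ⊢
    rw [h1, hi] at hx
    obtain ⟨k, hk, hkeq⟩ := hx
    rw [Sw_append_apply] at hkeq
    exact ⟨Sw S [i] k, hSwK [i] ⟨k, hk, rfl⟩, hkeq⟩
  have hUanti : Antitone U := antitone_nat_of_succ_le hUnest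
  have hUdiam : ∀ n, ∀ x ∈ U n, dist x y ≤ R ^ n * D := by
    intro n x hx
    obtain ⟨a, ha, haeq⟩ := hx
    obtain ⟨b, hb, hbeq⟩ := hyU n
    obtain ⟨ρ, hρ0, hρR, hρ⟩ := hSwdist (wseq n)
    rw [hwlen n] at hρR
    calc dist x y = ρ * dist a b := by rw [← haeq, ← hbeq, hρ]
      _ ≤ R ^ n * D :=
          mul_le_mul hρR (hDb a (Or.inl ha) b (Or.inl hb)) dist_nonneg (pow_nonneg hR0.le n)
  have hUsmall : ∀ x, (∀ n, x ∈ U n) → x = y := by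
    intro x hx
    have hd : ∀ n, dist x y ≤ R ^ n * D := fun n => hUdiam n x (hx n)
    have : dist x y ≤ 0 := by
      have hRD : Filter.Tendsto (fun n : ℕ => R ^ n * D) Filter.atTop (nhds 0) := by
        have := (tendsto_pow_atTop_nhds_zero_of_lt_one hR0.le hR1).mul_const D
        simpa using this
      exact ge_of_tendsto' hRD hd
    exact dist_le_zero.mp this
  -- frontier of level-n piece consists of vertex images
  have hFn : ∀ n, U n ∩ closure (K \ U n) ⊆ Sw S (wseq n) '' (V : Set (EuclideanSpace ℝ (Fin d))) := by
    intro n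
    set B : Set (EuclideanSpace ℝ (Fin d)) :=
      ⋃ g : {g : Fin n → Fin m // List.ofFn g ≠ wseq n}, Sw S (List.ofFn g.1) '' K with hBdef
    have hBclosed : IsClosed B :=
      isClosed_iUnion_of_finite fun g => (hKc.image (hSwcont _)).isClosed
    have hKU : K \ U n ⊆ B := by
      intro x hx
      obtain ⟨g', hg'⟩ := hcover n x hx.1
      have hne : List.ofFn g' ≠ wseq n := by
        intro h
        rw [h] at hg'
        exact hx.2 hg'
      exact mem_iUnion.mpr ⟨⟨g', hne⟩, hg'⟩
    intro x hx
    obtain ⟨hx1, hx2⟩ := hx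
    have hxB : x ∈ B := closure_minimal hKU hBclosed hx2
    obtain ⟨gg, hgg⟩ := mem_iUnion.mp hxB
    apply hsep (wseq n) (List.ofFn gg.1) (by rw [hwlen n, List.length_ofFn]) 
      (fun h => gg.2 h.symm) x
    · exact image_mono hKP hx1
    · exact image_mono hKP hgg
  have hyF : ∀ n, y ∉ closure (K \ U n) := by
    intro n hycl
    apply hyv
    exact mem_iUnion.mpr ⟨wseq n, hFn n ⟨hyUn n, hycl⟩⟩
  -- connectedness of K
  have hPconn : IsPreconnected P := by
    haveI : PreconnectedSpace ↥(Metric.closedBall (0 : EuclideanSpace ℝ (Fin d)) 1) := by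
      rw [← isPreconnected_iff_preconnectedSpace]
      exact (convex_closedBall _ _).isPreconnected
    have hcont : Continuous (fun z : ↥(Metric.closedBall (0 : EuclideanSpace ℝ (Fin d)) 1) =>
        ((e.symm z : ↥P) : EuclideanSpace ℝ (Fin d))) :=
      continuous_subtype_val.comp e.symm.continuous
    have hrange := isPreconnected_range hcont
    have : (Set.range fun z : ↥(Metric.closedBall (0 : EuclideanSpace ℝ (Fin d)) 1) =>
        ((e.symm z : ↥P) : EuclideanSpace ℝ (Fin d))) = P := by
      apply Set.Subset.antisymm
      · rintro x ⟨z, rfl⟩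
        exact (e.symm z).2
      · intro x hx
        exact ⟨e ⟨x, hx⟩, by simp⟩
    rwa [this] at hrange
  have hA1conn : IsPreconnected (⋃ i, S i '' P) := by
    haveI := hcontr
    haveI : PreconnectedSpace ↥(⋃ i, S i '' P) := inferInstance
    have hrange := isPreconnected_range (continuous_subtype_val (p := fun x => x ∈ ⋃ i, S i '' P))
    rwa [Subtype.range_coe] at hrange
  set A : ℕ → Set (EuclideanSpace ℝ (Fin d)) :=
    fun n => Nat.rec P (fun _ s => ⋃ i, S i '' s) n with hAdef
  have hA0 : A 0 = P := rfl
  have hAsucc : ∀ n, A (n + 1) = ⋃ i, S i '' A n := fun n => rfl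
  have hAc : ∀ n, IsCompact (A n) := by
    intro n
    induction n with
    | zero => exact hPcomp
    | succ n ih =>
      rw [hAsucc]
      exact isCompact_iUnion fun i => ih.image (hScont i)
  have hAne : ∀ n, (A n).Nonempty := by
    intro n
    induction n with
    | zero => exact ⟨p₀, hp₀⟩
    | succ n ih =>
      obtain ⟨a, ha⟩ := ih
      exact ⟨S (Classical.arbitrary _) a, by rw [hAsucc]; exact mem_iUnion.mpr ⟨_, a, ha, rfl⟩⟩
  have hAmono : ∀ n, A (n + 1) ⊆ A n := by
    intro n
    induction n with
    | zero =>
      rw [hAsucc, hA0]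
      exact iUnion_subset fun i => hD2 i
    | succ n ih =>
      rw [hAsucc (n+1), hAsucc n]
      exact iUnion_subset fun i => (image_mono (f := S i) ih).trans (subset_iUnion (fun i => S i '' A n) i)
  have hVA : ∀ n, (V : Set (EuclideanSpace ℝ (Fin d))) ⊆ A n := by
    intro n
    induction n with
    | zero => exact hVP
    | succ n ih =>
      intro v hv
      obtain ⟨i, hvi⟩ := mem_iUnion.mp (hD4 hv)
      obtain ⟨v', hv', hveq⟩ := hvi
      rw [hAsucc]
      exact mem_iUnion.mpr ⟨i, v', ih hv', hveq⟩
  have hKA : ∀ n, K ⊆ A n := by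
    intro n
    induction n with
    | zero => exact hKP
    | succ n ih =>
      rw [hAsucc]
      intro x hx
      rw [hKinv] at hx
      obtain ⟨i, hxi⟩ := mem_iUnion.mp hx
      obtain ⟨x', hx', hxeq⟩ := hxi
      exact mem_iUnion.mpr ⟨i, x', ih hx', hxeq⟩
  have hAconn : ∀ n, IsPreconnected (A n) := by
    intro n
    induction n with
    | zero => exact hPconn
    | succ n ih =>
      match n, ih with
      | 0, _ => exact hA1conn
      | (n+1), ih =>
        rw [hAsucc (n+1)]
        apply union_preconnected_of_pattern (fun i => S i '' P) (fun i => S i '' A (n+1))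
          (fun i => (hPcomp.image (hScont i)).isClosed) (fun i => ⟨S i p₀, p₀, hp₀, rfl⟩)
          hA1conn (fun i => ih.image _ (hScont i).continuousOn)
          (fun i => (hAne (n+1)).image (S i))
        intro i j hmeet
        by_cases hij : i = j
        · subst hij
          obtain ⟨a, ha⟩ := hAne (n+1)
          exact ⟨S i a, ⟨a, ha, rfl⟩, ⟨a, ha, rfl⟩⟩
        · rcases hD3 i j hij with hemp | ⟨v, hvint, hvi, hvj⟩
          · rw [hemp] at hmeet
            exact absurd hmeet Set.not_nonempty_empty
          · obtain ⟨a, haV, haeq⟩ := hvi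
            obtain ⟨b, hbV, hbeq⟩ := hvj
            exact ⟨v, ⟨a, hVA (n+1) haV, haeq⟩, ⟨b, hVA (n+1) hbV, hbeq⟩⟩
  have hAmem : ∀ n, ∀ x ∈ A n, ∃ w : List (Fin m), w.length = n ∧ x ∈ Sw S w '' P := by
    intro n
    induction n with
    | zero => exact fun x hx => ⟨[], rfl, ⟨x, hx, rfl⟩⟩
    | succ n ih =>
      intro x hx
      rw [hAsucc] at hx
      obtain ⟨i, hxi⟩ := mem_iUnion.mp hx
      obtain ⟨x', hx', hxeq⟩ := hxi
      obtain ⟨w, hwl, p, hp, hpeq⟩ := ih x' hx'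
      exact ⟨i :: w, by simp [hwl], ⟨p, hp, by rw [Sw_cons_apply, hpeq, hxeq]⟩⟩
  have hKiInter : K = ⋂ n, A n := by
    apply Set.Subset.antisymm
    · exact subset_iInter hKA
    · intro x hx
      have hcl : x ∈ closure K := by
        rw [Metric.mem_closure_iff]
        intro ε hε
        obtain ⟨n, hn⟩ := hsmall ε hε
        obtain ⟨w, hwl, p, hp, hpeq⟩ := hAmem n x (mem_iInter.mp hx n)
        obtain ⟨ρ, hρ0, hρR, hρ⟩ := hSwdist w
        rw [hwl] at hρR
        refine ⟨Sw S w k₀, hSwK w ⟨k₀, hk₀, rfl⟩, ?_⟩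
        calc dist x (Sw S w k₀) = ρ * dist p k₀ := by rw [← hpeq, hρ]
          _ ≤ R ^ n * D :=
              mul_le_mul hρR (hDb p (Or.inr hp) k₀ (Or.inl hk₀)) dist_nonneg (pow_nonneg hR0.le n)
          _ < ε := hn
      rwa [hKc.isClosed.closure_eq] at hcl
  have hKconn : IsPreconnected K := by
    rw [hKiInter]
    exact nested_preconnected A hAc hAmono hAconn
  -- every connected component of K \ {y} meets every U n
  have hmeetU : ∀ n, ∀ z ∈ K \ {y}, (connectedComponentIn (K \ {y}) z ∩ U n).Nonempty := by
    intro n z hz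
    by_contra hcon
    rw [Set.not_nonempty_iff_eq_empty] at hcon
    set C := connectedComponentIn (K \ {y}) z with hCdef
    have hzC : z ∈ C := mem_connectedComponentIn hz
    have hCsub : C ⊆ K \ {y} := connectedComponentIn_subset _ _
    set W := closure (K \ U n) with hWdef
    have hWK : W ⊆ K := closure_minimal diff_subset hKc.isClosed
    have hWc : IsCompact W := hKc.of_isClosed_subset isClosed_closure hWK
    have hyW : y ∉ W := hyF n
    have hWne : W ≠ K := fun h => hyW (h ▸ hy)
    have hCW : C ⊆ W := by
      intro c hc
      apply subset_closure
      refine ⟨(hCsub hc).1, ?_⟩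
      intro hcU
      exact absurd hcon (Set.Nonempty.ne_empty ⟨c, hc, hcU⟩)
    have hzW : z ∈ W := hCW hzC
    obtain ⟨q, hq1, hq2⟩ := bump_lemma hKc hKconn hWc hWK hWne hzW
    have hDsub : connectedComponentIn W z ⊆ K \ {y} := by
      intro a ha
      have haW := connectedComponentIn_subset W z ha
      refine ⟨hWK haW, fun h => hyW ?_⟩
      rw [mem_singleton_iff] at h
      rw [← h]
      exact haW
    have hDC : connectedComponentIn W z ⊆ C :=
      (isPreconnected_connectedComponentIn).subset_connectedComponentIn
        (mem_connectedComponentIn hzW) hDsub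
    have hclU : closure (K \ W) ⊆ U n := by
      apply closure_minimal _ (hUc n).isClosed
      intro a ha
      by_contra haU
      exact ha.2 (subset_closure ⟨ha.1, haU⟩)
    exact absurd hcon (Set.Nonempty.ne_empty ⟨q, hDC hq1, hclU hq2⟩)
  -- each component not contained in U n contains a vertex image of level n
  have hhit : ∀ n, ∀ z ∈ K \ {y}, ¬ (connectedComponentIn (K \ {y}) z ⊆ U n) →
      (connectedComponentIn (K \ {y}) z ∩
        Sw S (wseq n) '' (V : Set (EuclideanSpace ℝ (Fin d)))).Nonempty := by
    intro n z hz hnsub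
    set C := connectedComponentIn (K \ {y}) z with hCdef
    have hCsub : C ⊆ K \ {y} := connectedComponentIn_subset _ _
    have hcov : C ⊆ U n ∪ closure (K \ U n) := by
      intro c hc
      by_cases hcU : c ∈ U n
      · exact Or.inl hcU
      · exact Or.inr (subset_closure ⟨(hCsub hc).1, hcU⟩)
    obtain ⟨c₀, hc₀⟩ := not_subset.mp hnsub
    obtain ⟨q, hq1, hq2, hq3⟩ := isPreconnected_closed_iff.mp isPreconnected_connectedComponentIn
      (U n) (closure (K \ U n)) (hUc n).isClosed isClosed_closure hcov
      (hmeetU n z hz) ⟨c₀, hc₀.1, subset_closure ⟨(hCsub hc₀.1).1, hc₀.2⟩⟩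
    exact ⟨q, hq1, hFn n ⟨hq2, hq3⟩⟩
  -- the counting argument
  set 𝒞 : Set (Set (EuclideanSpace ℝ (Fin d))) :=
    {C | ∃ z ∈ K \ {y}, C = connectedComponentIn (K \ {y}) z} with h𝒞def
  have hkey : ∀ T : Finset (Set (EuclideanSpace ℝ (Fin d))), ↑T ⊆ 𝒞 → T.card ≤ V.card := by
    intro T hT
    have hesc : ∀ C ∈ T, ∃ n, ¬ C ⊆ U n := by
      intro C hC
      obtain ⟨z, hz, hCz⟩ := hT hC
      by_contra hall
      push_neg at hall
      have hzC : z ∈ C := by rw [hCz]; exact mem_connectedComponentIn hz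
      have hzy : z = y := hUsmall z (fun n => hall n hzC)
      exact hz.2 (mem_singleton_iff.mpr hzy)
    choose! nC hnC using hesc
    set N := T.sup nC with hNdef
    have hescN : ∀ C ∈ T, ¬ C ⊆ U N := by
      intro C hC hsub
      exact hnC C hC (hsub.trans (hUanti (Finset.le_sup hC)))
    have hpick : ∀ C ∈ T, ∃ p, p ∈ C ∧
        p ∈ Sw S (wseq N) '' (V : Set (EuclideanSpace ℝ (Fin d))) := by
      intro C hC
      obtain ⟨z, hz, hCz⟩ := hT hC
      have h1 := hhit N z hz (by rw [← hCz]; exact hescN C hC)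
      rw [← hCz] at h1
      obtain ⟨p, hp1, hp2⟩ := h1
      exact ⟨p, hp1, hp2⟩
    choose! pf hpf1 hpf2 using hpick
    have hinj : Set.InjOn pf ↑T := by
      intro C1 hC1 C2 hC2 heq
      rw [Finset.mem_coe] at hC1 hC2
      obtain ⟨z1, hz1, hCz1⟩ := hT hC1
      obtain ⟨z2, hz2, hCz2⟩ := hT hC2
      have hp1 : pf C1 ∈ connectedComponentIn (K \ {y}) z1 := hCz1.subset (hpf1 C1 hC1)
      have hp2 : pf C2 ∈ connectedComponentIn (K \ {y}) z2 := hCz2.subset (hpf1 C2 hC2)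
      rw [heq] at hp1
      rw [hCz1, hCz2, connectedComponentIn_eq hp1, connectedComponentIn_eq hp2]
    have hmapsto : ∀ C ∈ T, pf C ∈ V.image (Sw S (wseq N)) := by
      intro C hC
      obtain ⟨v, hv, hveq⟩ := hpf2 C hC
      exact Finset.mem_image.mpr ⟨v, Finset.mem_coe.mp hv, hveq⟩
    calc T.card ≤ (V.image (Sw S (wseq N))).card := Finset.card_le_card_of_injOn pf hmapsto hinj
      _ ≤ V.card := Finset.card_image_le
  have hfin : 𝒞.Finite := by
    by_contra hinf
    rw [← Set.not_infinite, not_not] at hinf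
    obtain ⟨T, hT1, hT2⟩ := hinf.exists_subset_card_eq (V.card + 1)
    have := hkey T hT1
    omega
  refine ⟨hfin, ?_⟩
  have h1 : Nat.card ↥𝒞 = 𝒞.ncard := Nat.card_coe_set_eq 𝒞
  rw [h1, Set.ncard_eq_toFinset_card 𝒞 hfin]
  exact hkey hfin.toFinset (by rw [Set.Finite.coe_toFinset])
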